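/- The graph Γ₅ is connected in the directed sense: for all integers x, y ≥ 2 with 5 ∤ x and 5 ∤ y, there exists a path in Γ₅ from x to y. -/

import Mathlib

/-- Vertices of the directed graph `Γ₅`: integers `n ≥ 2` not divisible by 5. -/
def IsVertex (n : ℕ) : Prop := 2 ≤ n ∧ ¬ (5 ∣ n)

/-- Edges of `Γ₅`: from `m` to `n` iff `n = (m+5)²` (up-edge) or `m = n²` (down-edge). -/
def IsEdge (m n : ℕ) : Prop := n = (m + 5) ^ 2 ∨ m = n ^ 2

/-- A path in `Γ₅` of length `L`: vertices `v 0, …, v L`, each consecutive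
pair joined by an edge. -/
def IsPath (v : ℕ → ℕ) (L : ℕ) : Prop :=
  (∀ j ≤ L, IsVertex (v j)) ∧ ∀ j < L, IsEdge (v j) (v (j + 1))

/-- Reachability in `Γ₅`. -/
def Reaches (x y : ℕ) : Prop := ∃ v L, IsPath v L ∧ v 0 = x ∧ v L = y

lemma reaches_refl {x : ℕ} (hx : IsVertex x) : Reaches x x :=
  ⟨fun _ => x, 0, ⟨fun _ _ => hx, fun j hj => absurd hj (Nat.not_lt_zero j)⟩, rfl, rfl⟩

lemma reaches_trans {x y z : ℕ} (h1 : Reaches x y) (h2 : Reaches y z) : Reaches x z := by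
  obtain ⟨v, L, ⟨hv, he⟩, hv0, hvL⟩ := h1
  obtain ⟨w, M, ⟨hw, hwe⟩, hw0, hwM⟩ := h2
  refine ⟨fun j => if j ≤ L then v j else w (j - L), L + M, ⟨?_, ?_⟩, ?_, ?_⟩
  · intro j hj
    by_cases h : j ≤ L
    · simpa [h] using hv j h
    · simp only [h, if_false]
      exact hw (j - L) (by omega)
  · intro j hj
    by_cases h : j < L
    · simpa [Nat.le_of_lt h, Nat.succ_le_of_lt h] using he j h
    · have h1 : ¬ (j + 1 ≤ L) := by omega
      simp only [h1, if_false]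
      by_cases h2 : j = L
      · rw [h2]
        simp only [le_refl, if_true, hvL, ← hw0]
        have hLL : L + 1 - L = 0 + 1 := by omega
        rw [hLL]
        exact hwe 0 (by omega)
      · have h3 : ¬ (j ≤ L) := by omega
        simp only [h3, if_false]
        have hj1 : j + 1 - L = (j - L) + 1 := by omega
        rw [hj1]
        exact hwe (j - L) (by omega)
  · simp [hv0]
  · by_cases h : M = 0
    · subst h
      simp only [Nat.add_zero, le_refl, if_true, hvL, ← hw0]
      simpa using hwM
    · have h' : ¬ (L + M ≤ L) := by omega
      simp only [h', if_false]
      simpa using hwM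

lemma vertex_add5 {n : ℕ} (hn : IsVertex n) : IsVertex (n + 5) :=
  ⟨by omega, fun h => hn.2 (by omega)⟩

lemma vertex_sq {n : ℕ} (hn : IsVertex n) : IsVertex (n ^ 2) := by
  refine ⟨?_, fun h => hn.2 (Nat.Prime.dvd_of_dvd_pow (by norm_num) h)⟩
  calc 2 ≤ n := hn.1
    _ ≤ n ^ 2 := Nat.le_self_pow (by norm_num) n

lemma reaches_edge {x y : ℕ} (hx : IsVertex x) (hy : IsVertex y) (h : IsEdge x y) :
    Reaches x y := by
  refine ⟨fun j => if j = 0 then x else y, 1, ⟨?_, ?_⟩, by simp, by simp⟩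
  · intro j _
    by_cases hj : j = 0 <;> simp [hj, hx, hy]
  · intro j hj
    have hj0 : j = 0 := by omega
    subst hj0
    simpa using h

lemma reaches_up {x : ℕ} (hx : IsVertex x) : Reaches x ((x + 5) ^ 2) :=
  reaches_edge hx (vertex_sq (vertex_add5 hx)) (Or.inl rfl)

lemma reaches_down {y : ℕ} (hy : IsVertex y) : Reaches (y ^ 2) y :=
  reaches_edge (vertex_sq hy) hy (Or.inr rfl)

lemma reaches_add5 {x : ℕ} (hx : IsVertex x) : Reaches x (x + 5) :=
  reaches_trans (reaches_up hx) (reaches_down (vertex_add5 hx))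

lemma reaches_climb {x : ℕ} (hx : IsVertex x) (k : ℕ) : Reaches x (x + 5 * k) := by
  induction k with
  | zero => simpa using reaches_refl hx
  | succ k ih =>
    obtain ⟨hx1, hx5⟩ := hx
    have hv : IsVertex (x + 5 * k) := ⟨by omega, fun h => hx5 (by omega)⟩
    have hs := reaches_add5 hv
    have heq : x + 5 * (k + 1) = x + 5 * k + 5 := by ring
    rw [heq]
    exact reaches_trans ih hs

lemma vertex_pow2 {y : ℕ} (hy : IsVertex y) (k : ℕ) : IsVertex (y ^ (2 ^ k)) := by
  refine ⟨?_, fun h => hy.2 (Nat.Prime.dvd_of_dvd_pow (by norm_num) h)⟩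
  calc 2 ≤ y := hy.1
    _ ≤ y ^ (2 ^ k) := Nat.le_self_pow (Nat.two_pow_pos k).ne' y

lemma reaches_downchain {y : ℕ} (hy : IsVertex y) (k : ℕ) : Reaches (y ^ (2 ^ k)) y := by
  induction k with
  | zero => simpa using reaches_refl hy
  | succ k ih =>
    have heq : y ^ (2 ^ (k + 1)) = (y ^ (2 ^ k)) ^ 2 := by
      rw [pow_succ, pow_mul]
    rw [heq]
    exact reaches_trans (reaches_down (vertex_pow2 hy k)) ih

lemma pow4_mod5 {x : ℕ} (h : ¬ 5 ∣ x) : x ^ 4 % 5 = 1 := by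
  have h5 : x % 5 = 1 ∨ x % 5 = 2 ∨ x % 5 = 3 ∨ x % 5 = 4 := by omega
  rcases h5 with h' | h' | h' | h' <;> rw [Nat.pow_mod, h']

/-- `Γ₅` is connected in the directed sense: for all integers `x, y ≥ 2`
with `5 ∤ x` and `5 ∤ y` there is a path in `Γ₅` from `x` to `y`. -/
theorem gamma5_connected (x y : ℕ) (hx2 : 2 ≤ x) (hx5 : ¬ (5 ∣ x))
    (hy2 : 2 ≤ y) (hy5 : ¬ (5 ∣ y)) :
    ∃ (v : ℕ → ℕ) (L : ℕ), IsPath v L ∧ v 0 = x ∧ v L = y := by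
  show Reaches x y
  have hx : IsVertex x := ⟨hx2, hx5⟩
  have hy : IsVertex y := ⟨hy2, hy5⟩
  -- Step 1: x reaches some vertex a with a % 5 = 1
  have step1 : ∃ a, Reaches x a ∧ a % 5 = 1 ∧ IsVertex a := by
    refine ⟨((x + 5) ^ 2 + 5) ^ 2, ?_, ?_, ?_⟩
    · exact reaches_trans (reaches_up hx) (reaches_up (vertex_sq (vertex_add5 hx)))
    · have e1 : (x + 5) ≡ x [MOD 5] := Nat.add_mod_right x 5
      have e2 : ((x + 5) ^ 2 + 5) ≡ x ^ 2 [MOD 5] :=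
        ((e1.pow 2).add_right 5).trans (Nat.add_mod_right (x ^ 2) 5)
      have e3 : ((x + 5) ^ 2 + 5) ^ 2 ≡ x ^ 4 [MOD 5] := by
        have h := e2.pow 2
        rw [← pow_mul] at h
        norm_num at h
        exact h
      have : ((x + 5) ^ 2 + 5) ^ 2 % 5 = x ^ 4 % 5 := e3
      rw [this, pow4_mod5 hx5]
    · refine ⟨?_, ?_⟩
      · calc 2 ≤ 5 ^ 2 := by norm_num
          _ ≤ ((x + 5) ^ 2 + 5) ^ 2 := Nat.pow_le_pow_left (Nat.le_add_left 5 _) 2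
      · intro h
        have e1 : (x + 5) ≡ x [MOD 5] := Nat.add_mod_right x 5
        have e2 : ((x + 5) ^ 2 + 5) ≡ x ^ 2 [MOD 5] :=
          ((e1.pow 2).add_right 5).trans (Nat.add_mod_right (x ^ 2) 5)
        have e3 : ((x + 5) ^ 2 + 5) ^ 2 ≡ x ^ 4 [MOD 5] := by
          have h' := e2.pow 2
          rw [← pow_mul] at h'
          norm_num at h'
          exact h'
        have hm : ((x + 5) ^ 2 + 5) ^ 2 % 5 = x ^ 4 % 5 := e3
        have := pow4_mod5 hx5
        omega
  obtain ⟨a, hxa, ha5, hVa⟩ := step1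
  -- Step 2: a reaches t := y ^ (2 ^ (a + 2))
  have ht5 : y ^ (2 ^ (a + 2)) % 5 = 1 := by
    have heq : y ^ (2 ^ (a + 2)) = (y ^ 4) ^ (2 ^ a) := by
      rw [← pow_mul]
      congr 1
      rw [pow_add]
      ring
    rw [heq, Nat.pow_mod, pow4_mod5 hy5]
    simp
  have hat : a ≤ y ^ (2 ^ (a + 2)) := by
    have h1 : a < 2 ^ a := (Nat.lt_two_pow_self (n := a))
    have h2 : a ≤ 2 ^ (a + 2) :=
      le_trans (le_of_lt h1) (Nat.pow_le_pow_right (by norm_num) (by omega))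
    calc a ≤ 2 ^ (2 ^ (a + 2)) :=
          le_trans (le_of_lt h1) (Nat.pow_le_pow_right (by norm_num) h2)
      _ ≤ y ^ (2 ^ (a + 2)) := Nat.pow_le_pow_left hy2 _
  obtain ⟨m, hm⟩ : ∃ m, y ^ (2 ^ (a + 2)) = a + 5 * m := ⟨(y ^ (2 ^ (a + 2)) - a) / 5, by omega⟩
  have hclimb : Reaches a (y ^ (2 ^ (a + 2))) := hm ▸ reaches_climb hVa m
  exact reaches_trans (reaches_trans hxa hclimb) (reaches_downchain hy (a + 2))
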